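/- arXiv:1902.08175 — 2 statements merged into one kernel-verified Lean document; each statement's English description precedes it below -/
import Mathlib

section
/- Lipschitz continuity of the dynamic Preisach operator (Lemma 3.1, first property): Let ρ₀ > 0, 𝒯 := {(ρ₁,ρ₂) ∈ ℝ² : −ρ₀ ≤ ρ₁ ≤ ρ₂ ≤ ρ₀} and p ∈ L¹(𝒯) with p > 0 a.e. Let u₁, u₂ ∈ L²(0,T), let ξ₁, ξ₂ : 𝒯 → [−1,1] be measurable, and for a.e. ρ ∈ 𝒯 with ρ₁ < ρ₂ let y_ρ¹, y_ρ² be the dynamic relay solutions for (u₁, ξ₁(ρ)) and (u₂, ξ₂(ρ)) respectively, with thresholds ρ₁, ρ₂ and slope k; assume ρ ↦ y_ρⁱ(t) is measurable for each t. Then sup_{t∈[0,T]} | ∫_𝒯 y_ρ¹(t)·p(ρ) dρ − ∫_𝒯 y_ρ²(t)·p(ρ) dρ | ≤ e^{T/2}·( ∫_𝒯 |ξ₁(ρ) − ξ₂(ρ)|·p(ρ) dρ + k·‖u₁ − u₂‖_{L²(0,T)}·∫_𝒯 p(ρ) dρ ). -/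
open MeasureTheory Set

/-- The function `g(u) = k·(u − ρ₂)⁺ − k·(ρ₁ − u)⁺` driving the dynamic relay. -/
noncomputable def relayG (ρ₁ ρ₂ k u : ℝ) : ℝ :=
  k * max (u - ρ₂) 0 - k * max (ρ₁ - u) 0

/-- `y` (with a.e. derivative `y'`) is a dynamic relay solution on `[0,T]` for input `u`
and initial state `ξ`: `y ∈ H¹(0,T)` (encoded by `y' ∈ L²(0,T)` together with the
fundamental-theorem-of-calculus representation), `y(0) = ξ`, `|y| ≤ 1` on `[0,T]`, and
`q(t) := g(u(t)) − y'(t)` satisfies `q(t)(z − y(t)) ≤ 0` for all `z ∈ [−1,1]`, a.e. `t`. -/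
def IsDynRelay (T ρ₁ ρ₂ k : ℝ) (u : ℝ → ℝ) (ξ : ℝ) (y y' : ℝ → ℝ) : Prop :=
  MemLp y' 2 (volume.restrict (Ioc (0:ℝ) T)) ∧
  y 0 = ξ ∧
  (∀ t ∈ Icc (0:ℝ) T, y t = ξ + ∫ s in (0:ℝ)..t, y' s) ∧
  (∀ t ∈ Icc (0:ℝ) T, |y t| ≤ 1) ∧
  (∀ᵐ t ∂(volume.restrict (Ioo (0:ℝ) T)),
    ∀ z ∈ Icc (-1:ℝ) 1, (relayG ρ₁ ρ₂ k (u t) - y' t) * (z - y t) ≤ 0)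

/-- The Preisach triangle `𝒯 = {(ρ₁,ρ₂) : −ρ₀ ≤ ρ₁ ≤ ρ₂ ≤ ρ₀}`. -/
def PreisachTriangle (ρ₀ : ℝ) : Set (ℝ × ℝ) :=
  {ρ : ℝ × ℝ | -ρ₀ ≤ ρ.1 ∧ ρ.1 ≤ ρ.2 ∧ ρ.2 ≤ ρ₀}

lemma diag_null : (volume : Measure (ℝ × ℝ)) {z : ℝ × ℝ | z.1 = z.2} = 0 := by
  have hd : {z : ℝ × ℝ | z.1 = z.2}
      = (LinearMap.range ((LinearMap.id : ℝ →ₗ[ℝ] ℝ).prod LinearMap.id) : Submodule ℝ (ℝ × ℝ)) := by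
    ext z
    simp only [mem_setOf_eq, SetLike.mem_coe, LinearMap.mem_range, LinearMap.prod_apply,
      LinearMap.id_coe, id_eq, Pi.prod, Prod.ext_iff]
    constructor
    · rintro h; exact ⟨z.1, rfl, h⟩
    · rintro ⟨a, rfl, h2⟩; exact h2
  rw [hd]
  apply Measure.addHaar_submodule
  intro htop
  have : ((0:ℝ), (1:ℝ)) ∈ (LinearMap.range ((LinearMap.id : ℝ →ₗ[ℝ] ℝ).prod LinearMap.id)) := by
    rw [htop]; trivial
  rcases this with ⟨a, ha⟩
  simp only [LinearMap.prod_apply, LinearMap.id_coe, id_eq, Pi.prod, Prod.ext_iff] at ha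
  rcases ha with ⟨h1, h2⟩
  simp_all

lemma sq_setIntegral {H : ℝ → ℝ} (hH : Integrable H) (t : ℝ) :
    (∫ s in Ioc (0:ℝ) t, H s) ^ 2
      = 2 * ∫ s in Ioc (0:ℝ) t, (∫ r in Ioc (0:ℝ) s, H r) * H s := by
  set μ := volume.restrict (Ioc (0:ℝ) t) with hμ
  have hHμ : Integrable H μ := hH.integrableOn
  set HH : ℝ × ℝ → ℝ := fun z => H z.1 * H z.2 with hHH
  have hHHint : Integrable HH (μ.prod μ) := hHμ.mul_prod hHμ
  set A : Set (ℝ × ℝ) := {z : ℝ × ℝ | z.1 ≤ z.2} with hA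
  have hAmeas : MeasurableSet A := (isClosed_le continuous_fst continuous_snd).measurableSet
  set A' : Set (ℝ × ℝ) := {z : ℝ × ℝ | z.2 ≤ z.1} with hA'
  have hA'meas : MeasurableSet A' := (isClosed_le continuous_snd continuous_fst).measurableSet
  set D : Set (ℝ × ℝ) := {z : ℝ × ℝ | z.1 = z.2} with hD
  have hDmeas : MeasurableSet D := (isClosed_eq continuous_fst continuous_snd).measurableSet
  have hDnull : (μ.prod μ) D = 0 := by
    have h1 : μ.prod μ = (volume.prod volume).restrict ((Ioc (0:ℝ) t) ×ˢ (Ioc (0:ℝ) t)) :=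
      Measure.prod_restrict _ _
    rw [h1]
    refine le_antisymm ?_ zero_le
    calc (volume.prod volume).restrict ((Ioc (0:ℝ) t) ×ˢ (Ioc (0:ℝ) t)) D
        ≤ (volume.prod volume) D := Measure.restrict_le_self _
      _ = 0 := by rw [← Measure.volume_eq_prod]; exact diag_null
  -- pointwise decomposition
  have hpt : ∀ z : ℝ × ℝ, HH z = A.indicator HH z + A'.indicator HH z - D.indicator HH z := by
    intro z
    simp only [indicator_apply, hA, hA', hD, mem_setOf_eq]
    rcases lt_trichotomy z.1 z.2 with h | h | h
    · rw [if_pos h.le, if_neg (not_le.2 h), if_neg h.ne]; ring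
    · rw [if_pos h.le, if_pos h.ge, if_pos h]; ring
    · rw [if_neg (not_le.2 h), if_pos h.le, if_neg h.ne']; ring
  -- swap symmetry
  have hswapfun : ∀ z : ℝ × ℝ, A'.indicator HH z = A.indicator HH (Prod.swap z) := by
    intro z
    simp only [indicator_apply, hA, hA', hHH, mem_setOf_eq, Prod.swap, Prod.fst_swap,
      Prod.snd_swap]
    split_ifs <;> ring
  have hswap : ∫ z, A'.indicator HH z ∂(μ.prod μ) = ∫ z, A.indicator HH z ∂(μ.prod μ) := by
    calc ∫ z, A'.indicator HH z ∂(μ.prod μ)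
        = ∫ z, A.indicator HH (Prod.swap z) ∂(μ.prod μ) := by
          exact integral_congr_ae (Filter.Eventually.of_forall hswapfun)
      _ = ∫ z, A.indicator HH z ∂(μ.prod μ) :=
          (Measure.measurePreserving_swap).integral_comp
            MeasurableEquiv.prodComm.measurableEmbedding _
  have hDzero : ∫ z, D.indicator HH z ∂(μ.prod μ) = 0 := by
    rw [integral_indicator hDmeas, Measure.restrict_eq_zero.mpr hDnull, integral_zero_measure]
  have hintA : Integrable (A.indicator HH) (μ.prod μ) := hHHint.indicator hAmeas
  have hintA' : Integrable (A'.indicator HH) (μ.prod μ) := hHHint.indicator hA'meas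
  have hintD : Integrable (D.indicator HH) (μ.prod μ) := hHHint.indicator hDmeas
  have hsum : ∫ z, HH z ∂(μ.prod μ) = 2 * ∫ z, A.indicator HH z ∂(μ.prod μ) := by
    calc ∫ z, HH z ∂(μ.prod μ)
        = ∫ z, (A.indicator HH z + A'.indicator HH z - D.indicator HH z) ∂(μ.prod μ) :=
          integral_congr_ae (Filter.Eventually.of_forall hpt)
      _ = (∫ z, A.indicator HH z ∂(μ.prod μ)) + (∫ z, A'.indicator HH z ∂(μ.prod μ))
            - ∫ z, D.indicator HH z ∂(μ.prod μ) := by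
          have hadd : Integrable (fun z => A.indicator HH z + A'.indicator HH z) (μ.prod μ) :=
            hintA.add hintA'
          rw [integral_sub hadd hintD, integral_add hintA hintA']
      _ = 2 * ∫ z, A.indicator HH z ∂(μ.prod μ) := by rw [hswap, hDzero]; ring
  have hLHS : ∫ z, HH z ∂(μ.prod μ) = (∫ s in Ioc (0:ℝ) t, H s) ^ 2 := by
    rw [hHH, integral_prod_mul]; rw [sq]
  -- compute ∫ A.indicator HH via iterated integral
  have hiter : ∫ z, A.indicator HH z ∂(μ.prod μ)
      = ∫ s, (∫ r, A.indicator HH (r, s) ∂μ) ∂μ := integral_prod_symm _ hintA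
  have hinner : ∀ s ∈ Ioc (0:ℝ) t,
      (∫ r, A.indicator HH (r, s) ∂μ) = (∫ r in Ioc (0:ℝ) s, H r) * H s := by
    intro s hs
    have hfun : ∀ r, A.indicator HH (r, s) = (Iic s).indicator H r * H s := by
      intro r
      by_cases hr : r ≤ s
      · rw [indicator_of_mem (show (r, s) ∈ A from hr) HH,
          indicator_of_mem (show r ∈ Iic s from hr) H]
      · rw [indicator_of_notMem (show (r, s) ∉ A from hr) HH,
          indicator_of_notMem (show r ∉ Iic s from hr) H, zero_mul]
    rw [integral_congr_ae (Filter.Eventually.of_forall hfun), integral_mul_const]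
    congr 1
    rw [integral_indicator measurableSet_Iic, hμ, Measure.restrict_restrict measurableSet_Iic]
    have hset : Iic s ∩ Ioc (0:ℝ) t = Ioc (0:ℝ) s := by
      ext r
      simp only [mem_inter_iff, mem_Iic, mem_Ioc]
      constructor
      · rintro ⟨h1, h2, h3⟩; exact ⟨h2, h1⟩
      · rintro ⟨h1, h2⟩; exact ⟨h2, ⟨h1, h2.trans hs.2⟩⟩
    rw [hset]
  have houter : ∫ s, (∫ r, A.indicator HH (r, s) ∂μ) ∂μ
      = ∫ s in Ioc (0:ℝ) t, (∫ r in Ioc (0:ℝ) s, H r) * H s := by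
    refine setIntegral_congr_ae measurableSet_Ioc ?_
    exact Filter.Eventually.of_forall fun s hs => hinner s hs
  rw [← hLHS, hsum, hiter, houter]

lemma relayG_lipschitz {ρ₁ ρ₂ k : ℝ} (hk : 0 ≤ k) (hρ : ρ₁ ≤ ρ₂) (a b : ℝ) :
    |relayG ρ₁ ρ₂ k a - relayG ρ₁ ρ₂ k b| ≤ k * |a - b| := by
  have hrep : ∀ u, relayG ρ₁ ρ₂ k u = k * (u - min (max u ρ₁) ρ₂) := by
    intro u
    unfold relayG
    rcases le_total u ρ₁ with h | h
    · rw [max_eq_right (by linarith : u - ρ₂ ≤ 0), max_eq_left (by linarith : 0 ≤ ρ₁ - u),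
        max_eq_right h, min_eq_left hρ]
      ring
    · rcases le_total u ρ₂ with h2 | h2
      · rw [max_eq_right (by linarith : u - ρ₂ ≤ 0), max_eq_right (by linarith : ρ₁ - u ≤ 0),
          max_eq_left h, min_eq_left h2]
        ring
      · rw [max_eq_left (by linarith : 0 ≤ u - ρ₂), max_eq_right (by linarith : ρ₁ - u ≤ 0),
          max_eq_left h, min_eq_right h2]
        ring
  have key : ∀ x y : ℝ, x ≤ y →
      |(y - min (max y ρ₁) ρ₂) - (x - min (max x ρ₁) ρ₂)| ≤ |y - x| := by
    intro x y hxy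
    have hmax1 : max x ρ₁ ≤ max y ρ₁ := max_le_max hxy le_rfl
    have hmin1 : min (max x ρ₁) ρ₂ ≤ min (max y ρ₁) ρ₂ := min_le_min hmax1 le_rfl
    have hmax2 : max y ρ₁ ≤ max x ρ₁ + (y - x) := by
      refine max_le ?_ ?_
      · nlinarith [le_max_left x ρ₁]
      · nlinarith [le_max_right x ρ₁]
    have hmin2 : min (max y ρ₁) ρ₂ ≤ min (max x ρ₁) ρ₂ + (y - x) := by
      calc min (max y ρ₁) ρ₂ ≤ min (max x ρ₁ + (y - x)) (ρ₂ + (y - x)) :=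
            min_le_min hmax2 (by linarith)
        _ = min (max x ρ₁) ρ₂ + (y - x) := min_add_add_right _ _ _
    rw [abs_le]
    constructor
    · have : |y - x| = y - x := abs_of_nonneg (by linarith)
      rw [this]; linarith
    · have : |y - x| = y - x := abs_of_nonneg (by linarith)
      rw [this]; linarith
  rw [hrep, hrep, ← mul_sub, abs_mul, abs_of_nonneg hk]
  rcases le_total a b with hab | hab
  · have h1 := key a b hab
    rw [abs_sub_comm] at h1
    rw [abs_sub_comm a b]
    exact mul_le_mul_of_nonneg_left h1 hk
  · exact mul_le_mul_of_nonneg_left (key b a hab) hk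

set_option maxHeartbeats 1000000 in
lemma relay_pointwise {T k ρ₁ ρ₂ : ℝ} (hT : 0 < T) (hk : 0 < k) (hρ : ρ₁ ≤ ρ₂)
    {u₁ u₂ : ℝ → ℝ}
    (hu₁ : MemLp u₁ 2 (volume.restrict (Ioc (0:ℝ) T)))
    (hu₂ : MemLp u₂ 2 (volume.restrict (Ioc (0:ℝ) T)))
    {ξ₁ ξ₂ : ℝ} {y₁ y₁' y₂ y₂' : ℝ → ℝ}
    (h₁ : IsDynRelay T ρ₁ ρ₂ k u₁ ξ₁ y₁ y₁')
    (h₂ : IsDynRelay T ρ₁ ρ₂ k u₂ ξ₂ y₂ y₂')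
    {t : ℝ} (ht : t ∈ Icc (0:ℝ) T) :
    |y₁ t - y₂ t| ≤ Real.exp (T / 2) *
      (|ξ₁ - ξ₂| + k * Real.sqrt (∫ s in (0:ℝ)..T, (u₁ s - u₂ s) ^ 2)) := by
  obtain ⟨hy₁L2, hy₁0, hy₁rep, hy₁bd, hy₁VI⟩ := h₁
  obtain ⟨hy₂L2, hy₂0, hy₂rep, hy₂bd, hy₂VI⟩ := h₂
  haveI : IsFiniteMeasure (volume.restrict (Ioc (0:ℝ) T)) :=
    ⟨by rw [Measure.restrict_apply_univ]; exact measure_Ioc_lt_top⟩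
  have hInt1 : IntegrableOn y₁' (Ioc (0:ℝ) T) :=
    memLp_one_iff_integrable.mp (hy₁L2.mono_exponent (by norm_num))
  have hInt2 : IntegrableOn y₂' (Ioc (0:ℝ) T) :=
    memLp_one_iff_integrable.mp (hy₂L2.mono_exponent (by norm_num))
  have hhInt : IntegrableOn (fun s => y₁' s - y₂' s) (Ioc (0:ℝ) T) := hInt1.sub hInt2
  set c : ℝ := ξ₁ - ξ₂ with hc
  set H : ℝ → ℝ := (Ioc (0:ℝ) T).indicator (fun s => y₁' s - y₂' s) with hHdef
  have hHint : Integrable H := hhInt.integrable_indicator measurableSet_Ioc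
  set F : ℝ → ℝ := fun x => ∫ s in (0:ℝ)..x, H s with hFdef
  have hFcont : Continuous F := hHint.continuous_primitive 0
  set w : ℝ → ℝ := fun x => c + F x with hwdef
  have hwcont : Continuous w := continuous_const.add hFcont
  have hFset : ∀ x : ℝ, 0 ≤ x → F x = ∫ s in Ioc (0:ℝ) x, H s := fun x hx =>
    intervalIntegral.integral_of_le hx
  -- agreement with y₁ - y₂ on [0, T]
  have hwagree : ∀ x ∈ Icc (0:ℝ) T, y₁ x - y₂ x = w x := by
    intro x hx
    have hsub : Ioc (0:ℝ) x ⊆ Ioc (0:ℝ) T := Ioc_subset_Ioc le_rfl hx.2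
    have hHh : ∀ s ∈ Ioc (0:ℝ) x, H s = y₁' s - y₂' s := fun s hs =>
      indicator_of_mem (hsub hs) _
    rw [hy₁rep x hx, hy₂rep x hx, hwdef]
    simp only
    rw [hFset x hx.1]
    rw [intervalIntegral.integral_of_le hx.1, intervalIntegral.integral_of_le hx.1]
    rw [setIntegral_congr_fun measurableSet_Ioc hHh,
      integral_sub (hInt1.mono_set hsub) (hInt2.mono_set hsub)]
    ring
  -- quantities
  set N : ℝ := ∫ s in Ioc (0:ℝ) T, (u₁ s - u₂ s) ^ 2 with hNdef
  have hNint : IntegrableOn (fun s => (u₁ s - u₂ s) ^ 2) (Ioc (0:ℝ) T) :=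
    (hu₁.sub hu₂).integrable_sq
  have hN0 : 0 ≤ N := setIntegral_nonneg measurableSet_Ioc fun s _ => sq_nonneg _
  -- pointwise differential inequality
  have hae : ∀ᵐ s ∂(volume.restrict (Ioo (0:ℝ) T)),
      2 * (w s * H s) ≤ w s ^ 2 + k ^ 2 * (u₁ s - u₂ s) ^ 2 := by
    filter_upwards [hy₁VI, hy₂VI, ae_restrict_mem measurableSet_Ioo] with s hVI1 hVI2 hs
    have hsIcc : s ∈ Icc (0:ℝ) T := ⟨hs.1.le, hs.2.le⟩
    have hb1 := abs_le.mp (hy₁bd s hsIcc)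
    have hb2 := abs_le.mp (hy₂bd s hsIcc)
    have e1 := hVI1 (y₂ s) ⟨hb2.1, hb2.2⟩
    have e2 := hVI2 (y₁ s) ⟨hb1.1, hb1.2⟩
    -- e2 : (g2 - y₂' s) * (y₁ s - y₂ s) ≤ 0
    have hsIoc : s ∈ Ioc (0:ℝ) T := ⟨hs.1, hs.2.le⟩
    have hHs : H s = y₁' s - y₂' s := indicator_of_mem hsIoc _
    have hws : w s = y₁ s - y₂ s := (hwagree s hsIcc).symm
    set g1 := relayG ρ₁ ρ₂ k (u₁ s)
    set g2 := relayG ρ₁ ρ₂ k (u₂ s)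
    have hg : |g1 - g2| ≤ k * |u₁ s - u₂ s| := relayG_lipschitz hk.le hρ _ _
    have step1 : (y₁' s - y₂' s) * (y₁ s - y₂ s) ≤ (g1 - g2) * (y₁ s - y₂ s) := by
      nlinarith [e1, e2]
    have step2 : (g1 - g2) * (y₁ s - y₂ s) ≤ (k * |u₁ s - u₂ s|) * |y₁ s - y₂ s| := by
      calc (g1 - g2) * (y₁ s - y₂ s) ≤ |(g1 - g2) * (y₁ s - y₂ s)| := le_abs_self _
        _ = |g1 - g2| * |y₁ s - y₂ s| := abs_mul _ _
        _ ≤ (k * |u₁ s - u₂ s|) * |y₁ s - y₂ s| :=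
            mul_le_mul_of_nonneg_right hg (abs_nonneg _)
    have step3 : 2 * ((k * |u₁ s - u₂ s|) * |y₁ s - y₂ s|)
        ≤ (k * |u₁ s - u₂ s|) ^ 2 + |y₁ s - y₂ s| ^ 2 := by
      have := two_mul_le_add_sq (k * |u₁ s - u₂ s|) |y₁ s - y₂ s|
      linarith
    rw [hHs, hws]
    have habs1 : |y₁ s - y₂ s| ^ 2 = (y₁ s - y₂ s) ^ 2 := sq_abs _
    have habs2 : (k * |u₁ s - u₂ s|) ^ 2 = k ^ 2 * (u₁ s - u₂ s) ^ 2 := by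
      rw [mul_pow, sq_abs]
    linarith [step1, step2, step3, habs1, habs2]
  -- FTC identity for w²
  have hwH_int : ∀ x ∈ Icc (0:ℝ) T, IntegrableOn (fun s => H s * w s) (Ioc (0:ℝ) x) := by
    intro x hx
    exact (hHint.integrableOn).mul_continuousOn_of_subset hwcont.continuousOn
      measurableSet_Ioc isCompact_Icc (Ioc_subset_Icc_self.trans (Icc_subset_Icc le_rfl hx.2))
  have hiden : ∀ x ∈ Icc (0:ℝ) T, w x ^ 2 = c ^ 2 + ∫ s in Ioc (0:ℝ) x, 2 * (w s * H s) := by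
    intro x hx
    have hFx := hFset x hx.1
    have hsq := sq_setIntegral hHint x
    have hFcongr : ∫ s in Ioc (0:ℝ) x, (∫ r in Ioc (0:ℝ) s, H r) * H s
        = ∫ s in Ioc (0:ℝ) x, F s * H s := by
      refine setIntegral_congr_fun measurableSet_Ioc fun s hs => ?_
      rw [hFset s hs.1.le]
    have hintFH : IntegrableOn (fun s => F s * H s) (Ioc (0:ℝ) x) := by
      have := hwH_int x hx
      have h2 : IntegrableOn (fun s => H s * F s) (Ioc (0:ℝ) x) :=
        (hHint.integrableOn).mul_continuousOn_of_subset hFcont.continuousOn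
          measurableSet_Ioc isCompact_Icc (Ioc_subset_Icc_self.trans (Icc_subset_Icc le_rfl hx.2))
      simpa [mul_comm] using h2
    have hIH : ∫ s in Ioc (0:ℝ) x, (2:ℝ) * (w s * H s)
        = 2 * c * (∫ s in Ioc (0:ℝ) x, H s) + 2 * ∫ s in Ioc (0:ℝ) x, F s * H s := by
      calc ∫ s in Ioc (0:ℝ) x, (2:ℝ) * (w s * H s)
          = ∫ s in Ioc (0:ℝ) x, ((2 * c) * H s + 2 * (F s * H s)) :=
            setIntegral_congr_fun measurableSet_Ioc fun s _ => by simp only [hwdef]; ring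
        _ = (∫ s in Ioc (0:ℝ) x, (2 * c) * H s) + ∫ s in Ioc (0:ℝ) x, 2 * (F s * H s) :=
            integral_add ((hHint.integrableOn).const_mul (2 * c)) (hintFH.const_mul 2)
        _ = 2 * c * (∫ s in Ioc (0:ℝ) x, H s) + 2 * ∫ s in Ioc (0:ℝ) x, F s * H s := by
            rw [integral_const_mul, integral_const_mul]
    have hFx2 : F x ^ 2 = 2 * ∫ s in Ioc (0:ℝ) x, F s * H s := by
      rw [hFx, hsq, hFcongr]
    have hwsq : w x ^ 2 = c ^ 2 + 2 * c * F x + F x ^ 2 := by simp only [hwdef]; ring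
    rw [hwsq, hFx2, hFx, hIH]; ring
  -- Gronwall
  set φ : ℝ → ℝ := fun x => w x ^ 2 with hφdef
  have hφcont : Continuous φ := hwcont.pow 2
  set ψ : ℝ → ℝ := fun x => ∫ s in (0:ℝ)..x, φ s with hψdef
  have hψderiv : ∀ x : ℝ, HasDerivAt ψ (φ x) x := fun x =>
    (hφcont.integral_hasStrictDerivAt 0 x).hasDerivAt
  set A : ℝ := c ^ 2 + k ^ 2 * N with hAdef
  have hA0 : 0 ≤ A := by positivity
  have hineq : ∀ x ∈ Icc (0:ℝ) T, φ x ≤ A + ψ x := by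
    intro x hx
    have hx0 := hx.1
    -- transfer the a.e. inequality to (0, x]
    have haex : ∀ᵐ s ∂(volume.restrict (Ioc (0:ℝ) x)),
        2 * (w s * H s) ≤ w s ^ 2 + k ^ 2 * (u₁ s - u₂ s) ^ 2 := by
      have hxsub : Ioc (0:ℝ) x ⊆ Ioo (0:ℝ) T ∪ {x} := by
        intro s hs
        rcases lt_or_eq_of_le hs.2 with h | h
        · exact Or.inl ⟨hs.1, lt_of_lt_of_le h hx.2⟩
        · exact Or.inr (by simp [h])
      refine ae_restrict_of_ae_restrict_of_subset hxsub ?_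
      rw [ae_restrict_union_iff]
      refine ⟨hae, ?_⟩
      have hz : volume.restrict ({x} : Set ℝ) = 0 :=
        Measure.restrict_eq_zero.mpr (measure_singleton x)
      rw [hz]
      simp
    have hintL : IntegrableOn (fun s => 2 * (w s * H s)) (Ioc (0:ℝ) x) := by
      have := hwH_int x hx
      have h2 : IntegrableOn (fun s => w s * H s) (Ioc (0:ℝ) x) := by
        simpa [mul_comm] using this
      exact h2.const_mul 2
    have hintR : IntegrableOn (fun s => w s ^ 2 + k ^ 2 * (u₁ s - u₂ s) ^ 2) (Ioc (0:ℝ) x) := by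
      refine Integrable.add ?_ ?_
      · exact (hφcont.integrableOn_Icc).mono_set
          (Ioc_subset_Icc_self.trans (Icc_subset_Icc le_rfl hx.2))
      · exact ((hNint.mono_set (Ioc_subset_Ioc le_rfl hx.2)).const_mul _)
    have hmono := integral_mono_ae hintL hintR haex
    have hsplit : ∫ s in Ioc (0:ℝ) x, (w s ^ 2 + k ^ 2 * (u₁ s - u₂ s) ^ 2)
        = (∫ s in Ioc (0:ℝ) x, w s ^ 2) + k ^ 2 * ∫ s in Ioc (0:ℝ) x, (u₁ s - u₂ s) ^ 2 := by
      rw [integral_add ((hφcont.integrableOn_Icc).mono_set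
          (Ioc_subset_Icc_self.trans (Icc_subset_Icc le_rfl hx.2)))
        ((hNint.mono_set (Ioc_subset_Ioc le_rfl hx.2)).const_mul _), integral_const_mul]
    have hψx : ψ x = ∫ s in Ioc (0:ℝ) x, w s ^ 2 := by
      rw [hψdef]
      simp only
      rw [intervalIntegral.integral_of_le hx0]
    have hNle : ∫ s in Ioc (0:ℝ) x, (u₁ s - u₂ s) ^ 2 ≤ N := by
      rw [hNdef]
      refine setIntegral_mono_set hNint ?_ ?_
      · exact Filter.Eventually.of_forall fun s => sq_nonneg _
      · exact HasSubset.Subset.eventuallyLE (Ioc_subset_Ioc le_rfl hx.2)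
    have := hiden x hx
    have hk2 : 0 ≤ k ^ 2 := sq_nonneg k
    calc φ x = c ^ 2 + ∫ s in Ioc (0:ℝ) x, 2 * (w s * H s) := hiden x hx
      _ ≤ c ^ 2 + ∫ s in Ioc (0:ℝ) x, (w s ^ 2 + k ^ 2 * (u₁ s - u₂ s) ^ 2) := by linarith
      _ = c ^ 2 + ((∫ s in Ioc (0:ℝ) x, w s ^ 2) + k ^ 2 * ∫ s in Ioc (0:ℝ) x, (u₁ s - u₂ s) ^ 2) := by
          rw [hsplit]
      _ ≤ c ^ 2 + (ψ x + k ^ 2 * N) := by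
          rw [hψx]
          have := mul_le_mul_of_nonneg_left hNle hk2
          linarith
      _ = A + ψ x := by rw [hAdef]; ring
  -- the Gronwall comparison function
  set G : ℝ → ℝ := fun x => Real.exp (-x) * (A + ψ x) with hGdef
  have hGderiv : ∀ x : ℝ, HasDerivAt G (Real.exp (-x) * (φ x - (A + ψ x))) x := by
    intro x
    have h1 : HasDerivAt (fun y : ℝ => Real.exp (-y)) (-Real.exp (-x)) x := by
      simpa using (hasDerivAt_neg x).exp
    have h2 : HasDerivAt (fun y => A + ψ y) (φ x) x := (hψderiv x).const_add A
    have := h1.mul h2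
    exact this.congr_deriv (by ring)
  have hGanti : AntitoneOn G (Icc (0:ℝ) T) := by
    refine antitoneOn_of_deriv_nonpos (convex_Icc 0 T) ?_ ?_ ?_
    · have hψcont : Continuous ψ := continuous_iff_continuousAt.mpr fun x => (hψderiv x).continuousAt
      exact ((Real.continuous_exp.comp continuous_neg).mul
          (continuous_const.add hψcont)).continuousOn
    · intro x hx
      exact (hGderiv x).differentiableAt.differentiableWithinAt
    · intro x hx
      rw [interior_Icc] at hx
      rw [(hGderiv x).deriv]
      have hxIcc : x ∈ Icc (0:ℝ) T := ⟨hx.1.le, hx.2.le⟩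
      have := hineq x hxIcc
      have hexp : 0 ≤ Real.exp (-x) := (Real.exp_pos _).le
      nlinarith
  have hψ0 : ψ 0 = 0 := by rw [hψdef]; simp
  have hG0 : G 0 = A := by rw [hGdef]; simp [hψ0]
  have hGt : G t ≤ A := by
    have := hGanti (left_mem_Icc.mpr hT.le) ht ht.1
    rwa [hG0] at this
  have hφt : φ t ≤ A * Real.exp T := by
    have h1 : A + ψ t ≤ A * Real.exp t := by
      have h2 : Real.exp (-t) * (A + ψ t) ≤ A := hGt
      have h3 := mul_le_mul_of_nonneg_left h2 (Real.exp_pos t).le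
      rw [← mul_assoc, ← Real.exp_add] at h3
      simp at h3
      linarith
    have h4 : φ t ≤ A + ψ t := hineq t ht
    have h5 : A * Real.exp t ≤ A * Real.exp T :=
      mul_le_mul_of_nonneg_left (Real.exp_le_exp.mpr ht.2) hA0
    linarith
  -- conclusion
  have hNN : (∫ s in (0:ℝ)..T, (u₁ s - u₂ s) ^ 2) = N :=
    intervalIntegral.integral_of_le hT.le
  rw [hNN]
  set R : ℝ := |c| + k * Real.sqrt N with hRdef
  have hR0 : 0 ≤ R := by positivity
  have hAR : A ≤ R ^ 2 := by
    have hs : Real.sqrt N ^ 2 = N := Real.sq_sqrt hN0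
    have hexp : R ^ 2 = c ^ 2 + 2 * |c| * (k * Real.sqrt N) + k ^ 2 * N := by
      rw [hRdef, add_sq, sq_abs, mul_pow, hs]
    have h2 : 0 ≤ 2 * |c| * (k * Real.sqrt N) := by positivity
    rw [hAdef, hexp]
    linarith
  have hwt : y₁ t - y₂ t = w t := hwagree t ht
  rw [hwt]
  have h1 : |w t| ^ 2 ≤ Real.exp T * R ^ 2 := by
    rw [sq_abs]
    calc w t ^ 2 = φ t := rfl
      _ ≤ A * Real.exp T := hφt
      _ ≤ Real.exp T * R ^ 2 := by
          rw [mul_comm]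
          exact mul_le_mul_of_nonneg_left hAR (Real.exp_pos T).le
  have h2 : |w t| ≤ Real.sqrt (Real.exp T * R ^ 2) := by
    rw [← Real.sqrt_sq (abs_nonneg (w t))]
    exact Real.sqrt_le_sqrt h1
  have h3 : Real.sqrt (Real.exp T * R ^ 2) = Real.exp (T / 2) * R := by
    rw [Real.sqrt_mul (Real.exp_pos T).le, Real.sqrt_sq hR0]
    congr 1
    rw [show Real.exp T = Real.exp (T / 2) ^ 2 by rw [sq, ← Real.exp_add]; norm_num]
    exact Real.sqrt_sq (Real.exp_pos _).le
  rw [h3] at h2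
  exact h2

/-- Lipschitz continuity of the dynamic Preisach operator (Lemma 3.1, first property). -/
theorem dyn_preisach_lipschitz (T k ρ₀ : ℝ) (hT : 0 < T) (hk : 0 < k) (hρ₀ : 0 < ρ₀)
    (p : ℝ × ℝ → ℝ) (hp : IntegrableOn p (PreisachTriangle ρ₀))
    (hppos : ∀ᵐ ρ ∂(volume.restrict (PreisachTriangle ρ₀)), 0 < p ρ)
    (u₁ u₂ : ℝ → ℝ)
    (hu₁ : MemLp u₁ 2 (volume.restrict (Ioc (0:ℝ) T)))
    (hu₂ : MemLp u₂ 2 (volume.restrict (Ioc (0:ℝ) T)))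
    (ξ₁ ξ₂ : ℝ × ℝ → ℝ) (hξ₁m : Measurable ξ₁) (hξ₂m : Measurable ξ₂)
    (hξ₁ : ∀ ρ, ξ₁ ρ ∈ Icc (-1:ℝ) 1) (hξ₂ : ∀ ρ, ξ₂ ρ ∈ Icc (-1:ℝ) 1)
    (y₁ y₂ : ℝ × ℝ → ℝ → ℝ)
    (hy₁ : ∀ᵐ ρ ∂(volume.restrict (PreisachTriangle ρ₀)), ρ.1 < ρ.2 →
      ∃ y' : ℝ → ℝ, IsDynRelay T ρ.1 ρ.2 k u₁ (ξ₁ ρ) (y₁ ρ) y')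
    (hy₂ : ∀ᵐ ρ ∂(volume.restrict (PreisachTriangle ρ₀)), ρ.1 < ρ.2 →
      ∃ y' : ℝ → ℝ, IsDynRelay T ρ.1 ρ.2 k u₂ (ξ₂ ρ) (y₂ ρ) y')
    (hmeas₁ : ∀ t ∈ Icc (0:ℝ) T,
      AEStronglyMeasurable (fun ρ => y₁ ρ t) (volume.restrict (PreisachTriangle ρ₀)))
    (hmeas₂ : ∀ t ∈ Icc (0:ℝ) T,
      AEStronglyMeasurable (fun ρ => y₂ ρ t) (volume.restrict (PreisachTriangle ρ₀))) :
    ∀ t ∈ Icc (0:ℝ) T,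
      |(∫ ρ in PreisachTriangle ρ₀, y₁ ρ t * p ρ) -
        (∫ ρ in PreisachTriangle ρ₀, y₂ ρ t * p ρ)| ≤
      Real.exp (T / 2) *
        ((∫ ρ in PreisachTriangle ρ₀, |ξ₁ ρ - ξ₂ ρ| * p ρ) +
          k * Real.sqrt (∫ s in (0:ℝ)..T, (u₁ s - u₂ s) ^ 2) *
            ∫ ρ in PreisachTriangle ρ₀, p ρ) := by
  intro t ht
  have hTm : MeasurableSet (PreisachTriangle ρ₀) := by
    have : PreisachTriangle ρ₀
        = {ρ : ℝ × ℝ | -ρ₀ ≤ ρ.1} ∩ ({ρ : ℝ × ℝ | ρ.1 ≤ ρ.2} ∩ {ρ : ℝ × ℝ | ρ.2 ≤ ρ₀}) := by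
      ext ρ; simp [PreisachTriangle, mem_setOf_eq, and_assoc]
    rw [this]
    exact (measurableSet_le measurable_const measurable_fst).inter
      ((measurableSet_le measurable_fst measurable_snd).inter
        (measurableSet_le measurable_snd measurable_const))
  have hlt : ∀ᵐ ρ ∂(volume.restrict (PreisachTriangle ρ₀)), ρ.1 < ρ.2 := by
    have hne : ∀ᵐ ρ : ℝ × ℝ ∂volume, ρ.1 ≠ ρ.2 := by
      rw [ae_iff]
      simp only [ne_eq, not_not]
      exact diag_null
    filter_upwards [ae_restrict_of_ae hne, ae_restrict_mem hTm] with ρ h2 h3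
    exact lt_of_le_of_ne h3.2.1 h2
  set I : ℝ := ∫ s in (0:ℝ)..T, (u₁ s - u₂ s) ^ 2 with hIdef
  have hbd : ∀ᵐ ρ ∂(volume.restrict (PreisachTriangle ρ₀)),
      |y₁ ρ t - y₂ ρ t| ≤ Real.exp (T / 2) * (|ξ₁ ρ - ξ₂ ρ| + k * Real.sqrt I)
        ∧ |y₁ ρ t| ≤ 1 ∧ |y₂ ρ t| ≤ 1 := by
    filter_upwards [hy₁, hy₂, hlt] with ρ h1 h2 h3
    obtain ⟨y₁', hr1⟩ := h1 h3
    obtain ⟨y₂', hr2⟩ := h2 h3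
    exact ⟨relay_pointwise hT hk h3.le hu₁ hu₂ hr1 hr2 ht,
      hr1.2.2.2.1 t ht, hr2.2.2.2.1 t ht⟩
  have hpa : Integrable p (volume.restrict (PreisachTriangle ρ₀)) := hp
  have hi1 : Integrable (fun ρ => y₁ ρ t * p ρ) (volume.restrict (PreisachTriangle ρ₀)) := by
    refine Integrable.mono' hpa.abs ((hmeas₁ t ht).mul hpa.aestronglyMeasurable) ?_
    filter_upwards [hbd] with ρ h
    calc ‖y₁ ρ t * p ρ‖ = |y₁ ρ t| * |p ρ| := by rw [Real.norm_eq_abs, abs_mul]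
      _ ≤ 1 * |p ρ| := mul_le_mul_of_nonneg_right h.2.1 (abs_nonneg _)
      _ = |p ρ| := one_mul _
  have hi2 : Integrable (fun ρ => y₂ ρ t * p ρ) (volume.restrict (PreisachTriangle ρ₀)) := by
    refine Integrable.mono' hpa.abs ((hmeas₂ t ht).mul hpa.aestronglyMeasurable) ?_
    filter_upwards [hbd] with ρ h
    calc ‖y₂ ρ t * p ρ‖ = |y₂ ρ t| * |p ρ| := by rw [Real.norm_eq_abs, abs_mul]
      _ ≤ 1 * |p ρ| := mul_le_mul_of_nonneg_right h.2.2 (abs_nonneg _)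
      _ = |p ρ| := one_mul _
  have hiξ : Integrable (fun ρ => |ξ₁ ρ - ξ₂ ρ| * p ρ)
      (volume.restrict (PreisachTriangle ρ₀)) := by
    refine Integrable.mono' (hpa.abs.const_mul 2)
      ((((hξ₁m.sub hξ₂m).abs).aestronglyMeasurable).mul hpa.aestronglyMeasurable) ?_
    refine Filter.Eventually.of_forall fun ρ => ?_
    have h1 : |ξ₁ ρ - ξ₂ ρ| ≤ 2 := by
      have a1 := hξ₁ ρ
      have a2 := hξ₂ ρ
      rw [mem_Icc] at a1 a2
      rw [abs_le]
      constructor <;> linarith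
    calc ‖|ξ₁ ρ - ξ₂ ρ| * p ρ‖ = |ξ₁ ρ - ξ₂ ρ| * |p ρ| := by
          rw [Real.norm_eq_abs, abs_mul, abs_abs]
      _ ≤ 2 * |p ρ| := mul_le_mul_of_nonneg_right h1 (abs_nonneg _)
  set B : ℝ × ℝ → ℝ := fun ρ => Real.exp (T / 2) * (|ξ₁ ρ - ξ₂ ρ| * p ρ)
      + (Real.exp (T / 2) * (k * Real.sqrt I)) * p ρ with hBdef
  have hBint : Integrable B (volume.restrict (PreisachTriangle ρ₀)) :=
    (hiξ.const_mul _).add (hpa.const_mul _)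
  have key : ∀ᵐ ρ ∂(volume.restrict (PreisachTriangle ρ₀)),
      |y₁ ρ t * p ρ - y₂ ρ t * p ρ| ≤ B ρ := by
    filter_upwards [hbd, hppos] with ρ h hpρ
    have hp0 : 0 ≤ p ρ := hpρ.le
    calc |y₁ ρ t * p ρ - y₂ ρ t * p ρ| = |y₁ ρ t - y₂ ρ t| * |p ρ| := by
          rw [← sub_mul, abs_mul]
      _ = |y₁ ρ t - y₂ ρ t| * p ρ := by rw [abs_of_nonneg hp0]
      _ ≤ (Real.exp (T / 2) * (|ξ₁ ρ - ξ₂ ρ| + k * Real.sqrt I)) * p ρ :=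
          mul_le_mul_of_nonneg_right h.1 hp0
      _ = B ρ := by simp only [hBdef]; ring
  calc |(∫ ρ in PreisachTriangle ρ₀, y₁ ρ t * p ρ) - ∫ ρ in PreisachTriangle ρ₀, y₂ ρ t * p ρ|
      = |∫ ρ in PreisachTriangle ρ₀, (y₁ ρ t * p ρ - y₂ ρ t * p ρ)| := by
        rw [integral_sub hi1 hi2]
    _ ≤ ∫ ρ in PreisachTriangle ρ₀, |y₁ ρ t * p ρ - y₂ ρ t * p ρ| := by
        simpa [Real.norm_eq_abs] using
          norm_integral_le_integral_norm (μ := volume.restrict (PreisachTriangle ρ₀))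
            (fun ρ => y₁ ρ t * p ρ - y₂ ρ t * p ρ)
    _ ≤ ∫ ρ in PreisachTriangle ρ₀, B ρ := integral_mono_ae ((hi1.sub hi2).abs) hBint key
    _ = Real.exp (T / 2) * (∫ ρ in PreisachTriangle ρ₀, |ξ₁ ρ - ξ₂ ρ| * p ρ)
        + (Real.exp (T / 2) * (k * Real.sqrt I)) * ∫ ρ in PreisachTriangle ρ₀, p ρ := by
        simp only [hBdef]
        rw [integral_add (hiξ.const_mul _) (hpa.const_mul _), integral_const_mul,
          integral_const_mul]
    _ = Real.exp (T / 2) *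
        ((∫ ρ in PreisachTriangle ρ₀, |ξ₁ ρ - ξ₂ ρ| * p ρ) +
          k * Real.sqrt I * ∫ ρ in PreisachTriangle ρ₀, p ρ) := by ring
end

section
/- Order preservation of the dynamic Preisach operator (Lemma 3.1, order-preserving property): Let ρ₀ > 0, 𝒯 := {(ρ₁,ρ₂) ∈ ℝ² : −ρ₀ ≤ ρ₁ ≤ ρ₂ ≤ ρ₀} and p ∈ L¹(𝒯) with p > 0 a.e. Let u₁, u₂ ∈ L²(0,T) with u₁ ≤ u₂ a.e. in [0,T], and let ξ₁, ξ₂ : 𝒯 → [−1,1] be measurable with ξ₁(ρ) ≤ ξ₂(ρ) for a.e. ρ ∈ 𝒯. For a.e. ρ ∈ 𝒯 with ρ₁ < ρ₂ let y_ρ¹, y_ρ² be the dynamic relay solutions for (u₁, ξ₁(ρ)) and (u₂, ξ₂(ρ)) respectively, with thresholds ρ₁, ρ₂ and slope k; assume ρ ↦ y_ρⁱ(t) is measurable for each t. Then for every t ∈ [0,T], ∫_𝒯 y_ρ¹(t)·p(ρ) dρ ≤ ∫_𝒯 y_ρ²(t)·p(ρ) dρ. -/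
open MeasureTheory Set

/-- `relayG` is monotone in the input. -/
lemma relayG_mono' (ρ₁ ρ₂ k : ℝ) (hk : 0 ≤ k) : Monotone (relayG ρ₁ ρ₂ k) := by
  intro a b hab
  unfold relayG
  have h1 : max (a - ρ₂) 0 ≤ max (b - ρ₂) 0 := max_le_max (by linarith) le_rfl
  have h2 : max (ρ₁ - b) 0 ≤ max (ρ₁ - a) 0 := max_le_max (by linarith) le_rfl
  nlinarith

/-- If `w` is the primitive of an integrable `w'`, starts nonpositive, and has
`w' ≤ 0` a.e. wherever `w > 0`, then `w` stays nonpositive. -/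
lemma no_cross' (T : ℝ) (hT : 0 < T) (w w' : ℝ → ℝ)
    (hInt : IntegrableOn w' (Ioc 0 T))
    (hrep : ∀ t ∈ Icc (0:ℝ) T, w t = w 0 + ∫ s in (0:ℝ)..t, w' s)
    (hw0 : w 0 ≤ 0)
    (hder : ∀ᵐ t ∂(volume.restrict (Ioo (0:ℝ) T)), 0 < w t → w' t ≤ 0) :
    ∀ t ∈ Icc (0:ℝ) T, w t ≤ 0 := by
  have hII : IntervalIntegrable w' volume 0 T :=
    (intervalIntegrable_iff_integrableOn_Ioc_of_le hT.le).2 hInt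
  have hcont : ContinuousOn w (Icc 0 T) := by
    have hc := intervalIntegral.continuousOn_primitive_interval' hII (left_mem_uIcc)
    rw [uIcc_of_le hT.le] at hc
    exact (continuousOn_const.add hc).congr hrep
  intro t ht
  by_contra hpos
  push_neg at hpos
  set S := {r : ℝ | r ∈ Icc (0:ℝ) t ∧ w r ≤ 0} with hSdef
  have hS0 : (0:ℝ) ∈ S := ⟨⟨le_rfl, ht.1⟩, hw0⟩
  have hSbdd : BddAbove S := ⟨t, fun r hr => hr.1.2⟩
  have hSclosed : IsClosed S := by
    have : S = Icc 0 t ∩ w ⁻¹' (Iic 0) := rfl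
    rw [this]
    exact (hcont.mono (Icc_subset_Icc_right ht.2)).preimage_isClosed_of_isClosed
      isClosed_Icc isClosed_Iic
  set s := sSup S with hs
  have hsS : s ∈ S := hSclosed.csSup_mem ⟨0, hS0⟩ hSbdd
  have hs0 : 0 ≤ s := hsS.1.1
  have hst : s < t := lt_of_le_of_ne hsS.1.2 (fun h => by
    have := hsS.2; rw [h] at this; linarith)
  have hwpos : ∀ r ∈ Ioc s t, 0 < w r := by
    intro r hr
    by_contra hwr
    push_neg at hwr
    have : r ∈ S := ⟨⟨le_trans hs0 hr.1.le, hr.2⟩, hwr⟩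
    exact absurd (le_csSup hSbdd this) (not_le.2 hr.1)
  have hII1 : IntervalIntegrable w' volume 0 s := by
    apply hII.mono_set
    rw [uIcc_of_le hT.le, uIcc_of_le hs0]
    exact Icc_subset_Icc_right (le_trans hst.le ht.2)
  have hII2 : IntervalIntegrable w' volume s t := by
    apply hII.mono_set
    rw [uIcc_of_le hT.le, uIcc_of_le hst.le]
    exact Icc_subset_Icc hs0 ht.2
  have hadd : (∫ x in (0:ℝ)..s, w' x) + ∫ x in s..t, w' x = ∫ x in (0:ℝ)..t, w' x :=
    intervalIntegral.integral_add_adjacent_intervals hII1 hII2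
  have hwt : w t = w s + ∫ x in s..t, w' x := by
    rw [hrep t ht, hrep s ⟨hs0, le_trans hst.le ht.2⟩]
    linarith [hadd]
  have hneg : (∫ x in s..t, w' x) ≤ 0 := by
    rw [intervalIntegral.integral_of_le hst.le]
    apply setIntegral_nonpos_of_ae_restrict
    have h1 : ∀ᵐ r ∂(volume.restrict (Ioo s t)), 0 < w r → w' r ≤ 0 :=
      ae_restrict_of_ae_restrict_of_subset (Ioo_subset_Ioo hs0 ht.2) hder
    have h2 : (volume.restrict (Ioc s t)) = volume.restrict (Ioo s t) :=
      (Measure.restrict_congr_set Ioo_ae_eq_Ioc).symm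
    rw [h2]
    filter_upwards [h1, ae_restrict_mem measurableSet_Ioo] with r hr hrmem
    exact hr (hwpos r (Ioo_subset_Ioc_self hrmem))
  linarith [hsS.2]

/-- Comparison principle for dynamic relay solutions. -/
lemma relay_comparison' (T ρ₁ ρ₂ k : ℝ) (hT : 0 < T) (hk : 0 < k)
    (u₁ u₂ : ℝ → ℝ)
    (hule : ∀ᵐ t ∂(volume.restrict (Ioo (0:ℝ) T)), u₁ t ≤ u₂ t)
    (ξ₁ ξ₂ : ℝ) (hξ : ξ₁ ≤ ξ₂)
    (y₁ y₁' y₂ y₂' : ℝ → ℝ)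
    (h₁ : IsDynRelay T ρ₁ ρ₂ k u₁ ξ₁ y₁ y₁')
    (h₂ : IsDynRelay T ρ₁ ρ₂ k u₂ ξ₂ y₂ y₂') :
    ∀ t ∈ Icc (0:ℝ) T, y₁ t ≤ y₂ t := by
  obtain ⟨hL1, h10, hrep1, hbd1, hVI1⟩ := h₁
  obtain ⟨hL2, h20, hrep2, hbd2, hVI2⟩ := h₂
  haveI : IsFiniteMeasure (volume.restrict (Ioc (0:ℝ) T)) := by
    constructor
    rw [Measure.restrict_apply_univ]
    exact measure_Ioc_lt_top
  have hi1 : IntegrableOn y₁' (Ioc 0 T) := hL1.integrable one_le_two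
  have hi2 : IntegrableOn y₂' (Ioc 0 T) := hL2.integrable one_le_two
  have key := no_cross' T hT (fun t => y₁ t - y₂ t) (fun t => y₁' t - y₂' t)
    (hi1.sub hi2)
    (by
      intro t ht
      have e1 : IntervalIntegrable y₁' volume 0 t :=
        (intervalIntegrable_iff_integrableOn_Ioc_of_le ht.1).2
          (hi1.mono_set (Ioc_subset_Ioc_right ht.2))
      have e2 : IntervalIntegrable y₂' volume 0 t :=
        (intervalIntegrable_iff_integrableOn_Ioc_of_le ht.1).2
          (hi2.mono_set (Ioc_subset_Ioc_right ht.2))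
      rw [hrep1 t ht, hrep2 t ht, intervalIntegral.integral_sub e1 e2,
        hrep1 0 ⟨le_rfl, hT.le⟩, hrep2 0 ⟨le_rfl, hT.le⟩]
      simp
      ring)
    (by simp [h10, h20]; linarith)
    (by
      filter_upwards [hVI1, hVI2, hule, ae_restrict_mem measurableSet_Ioo]
        with t hA hB hu htmem hw
      have htI : t ∈ Icc (0:ℝ) T := ⟨htmem.1.le, htmem.2.le⟩
      have hy1m : y₁ t ∈ Icc (-1:ℝ) 1 := abs_le.1 (hbd1 t htI)
      have hy2m : y₂ t ∈ Icc (-1:ℝ) 1 := abs_le.1 (hbd2 t htI)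
      have A := hA (y₂ t) hy2m
      have B := hB (y₁ t) hy1m
      have hg : relayG ρ₁ ρ₂ k (u₁ t) ≤ relayG ρ₁ ρ₂ k (u₂ t) :=
        relayG_mono' ρ₁ ρ₂ k hk.le hu
      nlinarith [hw, A, B, hg])
  intro t ht
  have h := key t ht
  linarith

/-- The diagonal has two-dimensional Lebesgue measure zero. -/
lemma volume_diag_eq_zero' : volume {ρ : ℝ × ℝ | ρ.1 = ρ.2} = 0 := by
  have hm : MeasurableSet {ρ : ℝ × ℝ | ρ.1 = ρ.2} :=
    measurableSet_eq_fun measurable_fst measurable_snd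
  rw [Measure.volume_eq_prod, Measure.prod_apply hm]
  have : ∀ x : ℝ, (Prod.mk x ⁻¹' {ρ : ℝ × ℝ | ρ.1 = ρ.2}) = {x} := by
    intro x; ext y; simp [eq_comm]
  simp [this]

/-- Order preservation of the dynamic Preisach operator (Lemma 3.1). -/
theorem dyn_preisach_order_preservation (T k ρ₀ : ℝ) (hT : 0 < T) (hk : 0 < k) (hρ₀ : 0 < ρ₀)
    (p : ℝ × ℝ → ℝ) (hp : IntegrableOn p (PreisachTriangle ρ₀))
    (hppos : ∀ᵐ ρ ∂(volume.restrict (PreisachTriangle ρ₀)), 0 < p ρ)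
    (u₁ u₂ : ℝ → ℝ)
    (hu₁ : MemLp u₁ 2 (volume.restrict (Ioc (0:ℝ) T)))
    (hu₂ : MemLp u₂ 2 (volume.restrict (Ioc (0:ℝ) T)))
    (hule : ∀ᵐ t ∂(volume.restrict (Icc (0:ℝ) T)), u₁ t ≤ u₂ t)
    (ξ₁ ξ₂ : ℝ × ℝ → ℝ) (hξ₁m : Measurable ξ₁) (hξ₂m : Measurable ξ₂)
    (hξ₁ : ∀ ρ, ξ₁ ρ ∈ Icc (-1:ℝ) 1) (hξ₂ : ∀ ρ, ξ₂ ρ ∈ Icc (-1:ℝ) 1)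
    (hξle : ∀ᵐ ρ ∂(volume.restrict (PreisachTriangle ρ₀)), ξ₁ ρ ≤ ξ₂ ρ)
    (y₁ y₂ : ℝ × ℝ → ℝ → ℝ)
    (hy₁ : ∀ᵐ ρ ∂(volume.restrict (PreisachTriangle ρ₀)), ρ.1 < ρ.2 →
      ∃ y' : ℝ → ℝ, IsDynRelay T ρ.1 ρ.2 k u₁ (ξ₁ ρ) (y₁ ρ) y')
    (hy₂ : ∀ᵐ ρ ∂(volume.restrict (PreisachTriangle ρ₀)), ρ.1 < ρ.2 →
      ∃ y' : ℝ → ℝ, IsDynRelay T ρ.1 ρ.2 k u₂ (ξ₂ ρ) (y₂ ρ) y')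
    (hmeas₁ : ∀ t ∈ Icc (0:ℝ) T,
      AEStronglyMeasurable (fun ρ => y₁ ρ t) (volume.restrict (PreisachTriangle ρ₀)))
    (hmeas₂ : ∀ t ∈ Icc (0:ℝ) T,
      AEStronglyMeasurable (fun ρ => y₂ ρ t) (volume.restrict (PreisachTriangle ρ₀))) :
    ∀ t ∈ Icc (0:ℝ) T,
      (∫ ρ in PreisachTriangle ρ₀, y₁ ρ t * p ρ) ≤
        ∫ ρ in PreisachTriangle ρ₀, y₂ ρ t * p ρ := by
  intro t ht
  have hTm : MeasurableSet (PreisachTriangle ρ₀) := by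
    simp only [PreisachTriangle, setOf_and]
    exact ((measurableSet_le measurable_const measurable_fst).inter
      ((measurableSet_le measurable_fst measurable_snd).inter
       (measurableSet_le measurable_snd measurable_const)))
  have hdiag : ∀ᵐ ρ ∂(volume.restrict (PreisachTriangle ρ₀)), ρ.1 ≠ ρ.2 := by
    refine ae_restrict_of_ae ?_
    rw [ae_iff]
    convert volume_diag_eq_zero' using 2
    ext ρ; simp
  have hule' : ∀ᵐ s ∂(volume.restrict (Ioo (0:ℝ) T)), u₁ s ≤ u₂ s :=
    ae_restrict_of_ae_restrict_of_subset Ioo_subset_Icc_self hule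
  have key : ∀ᵐ ρ ∂(volume.restrict (PreisachTriangle ρ₀)),
      y₁ ρ t ≤ y₂ ρ t ∧ |y₁ ρ t| ≤ 1 ∧ |y₂ ρ t| ≤ 1 ∧ 0 < p ρ := by
    filter_upwards [hy₁, hy₂, hξle, hppos, hdiag, ae_restrict_mem hTm]
      with ρ hA hB hx hpp hne hmem
    have hlt : ρ.1 < ρ.2 := lt_of_le_of_ne hmem.2.1 hne
    obtain ⟨y₁', hr1⟩ := hA hlt
    obtain ⟨y₂', hr2⟩ := hB hlt
    exact ⟨relay_comparison' T ρ.1 ρ.2 k hT hk u₁ u₂ hule' _ _ hx _ _ _ _ hr1 hr2 t ht,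
      hr1.2.2.2.1 t ht, hr2.2.2.2.1 t ht, hpp⟩
  have hint1 : IntegrableOn (fun ρ => y₁ ρ t * p ρ) (PreisachTriangle ρ₀) := by
    apply Integrable.mono' hp.norm ((hmeas₁ t ht).mul hp.aestronglyMeasurable)
    filter_upwards [key] with ρ hρ
    simp only [Pi.mul_apply]
    rw [norm_mul]
    calc ‖y₁ ρ t‖ * ‖p ρ‖ ≤ 1 * ‖p ρ‖ := by
          apply mul_le_mul_of_nonneg_right _ (norm_nonneg _)
          rw [Real.norm_eq_abs]; exact hρ.2.1
      _ = ‖p ρ‖ := one_mul _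
  have hint2 : IntegrableOn (fun ρ => y₂ ρ t * p ρ) (PreisachTriangle ρ₀) := by
    apply Integrable.mono' hp.norm ((hmeas₂ t ht).mul hp.aestronglyMeasurable)
    filter_upwards [key] with ρ hρ
    simp only [Pi.mul_apply]
    rw [norm_mul]
    calc ‖y₂ ρ t‖ * ‖p ρ‖ ≤ 1 * ‖p ρ‖ := by
          apply mul_le_mul_of_nonneg_right _ (norm_nonneg _)
          rw [Real.norm_eq_abs]; exact hρ.2.2.1
      _ = ‖p ρ‖ := one_mul _
  apply integral_mono_ae hint1 hint2
  filter_upwards [key] with ρ hρ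
  exact mul_le_mul_of_nonneg_right hρ.1 hρ.2.2.2.le
end
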